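/- Let x₁ < x₂ be real numbers with ζ = x₂ − x₁ > 0, and let α, m > 0. Then ∫_ℝ |x − x₁|^m e^{−α(x−x₁)₊} e^{−α(x₂−x)₊} dx ≤ C(α, m) (1 + ζ^{m+1}) e^{−αζ}, where C(α,m) depends only on α and m. -/

import Mathlib

open MeasureTheory Set Real

lemma shift_integrableOn {f : ℝ → ℝ} (a : ℝ) (h : IntegrableOn f (Ioi 0)) :
    IntegrableOn (fun t => f (t - a)) (Ioi a) := by
  have A : MeasurableEmbedding fun x : ℝ => x + a :=
    (Homeomorph.addRight a).isClosedEmbedding.measurableEmbedding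
  rw [show (volume : Measure ℝ) = Measure.map (fun x => x + a) volume by
    rw [map_add_right_eq_self], A.integrableOn_map_iff]
  simp only [Function.comp_def, add_sub_cancel_right]
  convert h using 1
  ext x; simp
  ext x; simp

lemma shift_integral (f : ℝ → ℝ) (a : ℝ) :
    ∫ t in Ioi a, f (t - a) = ∫ t in Ioi 0, f t := by
  have A : MeasurableEmbedding fun x : ℝ => x + a :=
    (Homeomorph.addRight a).isClosedEmbedding.measurableEmbedding
  have h := A.setIntegral_map (μ := volume) (fun t => f (t - a)) (Ioi a)
  rw [map_add_right_eq_self] at h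
  rw [h]
  simp only [add_sub_cancel_right]
  congr 1
  ext x; simp

lemma refl_integrableOn {f : ℝ → ℝ} (h : IntegrableOn f (Ioi 0)) :
    IntegrableOn (fun t => f (-t)) (Iic 0) := by
  have A : MeasurableEmbedding fun x : ℝ => -x :=
    (Homeomorph.neg ℝ).isClosedEmbedding.measurableEmbedding
  rw [show (volume : Measure ℝ) = Measure.map (fun x : ℝ => -x) volume by
    rw [Measure.map_neg_eq_self], A.integrableOn_map_iff]
  simp only [Function.comp_def, neg_neg, neg_preimage, neg_Iic, neg_zero]
  exact (integrableOn_Ici_iff_integrableOn_Ioi (b := 0)).mpr h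

lemma key (α m : ℝ) (hα : 0 < α) (hm : 0 < m) :
    ∃ C : ℝ, 0 < C ∧ ∀ ζ : ℝ, 0 < ζ →
      (∫ t : ℝ, |t| ^ m * Real.exp (-α * max t 0) * Real.exp (-α * max (ζ - t) 0)) ≤
        C * (1 + ζ ^ (m + 1)) * Real.exp (-α * ζ) := by
  set F : ℝ → ℝ := fun t => |t| ^ m * Real.exp (-α * t) with hFdef
  set E : ℝ → ℝ := fun t => Real.exp (-α * t) with hEdef
  have hF : IntegrableOn F (Ioi 0) := by
    have h0 : IntegrableOn (fun x : ℝ => x ^ m * Real.exp (-α * x ^ (1:ℝ))) (Ioi 0) :=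
      integrableOn_rpow_mul_exp_neg_mul_rpow (by linarith) zero_lt_one hα
    exact h0.congr_fun (fun x hx => by
      simp only [Real.rpow_one, hFdef]; simp [abs_of_pos (mem_Ioi.mp hx)]) measurableSet_Ioi
  have hE : IntegrableOn E (Ioi 0) := exp_neg_integrableOn_Ioi 0 hα
  set I : ℝ := ∫ t in Ioi (0:ℝ), F t with hIdef
  set I₀ : ℝ := ∫ t in Ioi (0:ℝ), E t with hI0def
  have hInn : 0 ≤ I := setIntegral_nonneg measurableSet_Ioi (fun t _ => by positivity)
  have hI0nn : 0 ≤ I₀ := setIntegral_nonneg measurableSet_Ioi (fun t _ => (Real.exp_pos _).le)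
  refine ⟨I + 2 ^ m * I₀ + 2 ^ m * I + 1, by positivity, fun ζ hζ => ?_⟩
  set g : ℝ → ℝ := fun t => |t| ^ m * Real.exp (-α * max t 0) * Real.exp (-α * max (ζ - t) 0)
    with hgdef
  -- piece 1 : Iic 0
  have hg1eq : ∀ t ∈ Iic (0:ℝ), g t = Real.exp (-α * ζ) * F (-t) := by
    intro t ht
    simp only [hgdef, hFdef, max_eq_right (mem_Iic.mp ht), abs_neg,
      max_eq_left (by simp only [mem_Iic] at ht; linarith : (0:ℝ) ≤ ζ - t), mul_zero,
      Real.exp_zero, mul_one]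
    rw [show -α * (ζ - t) = -α * ζ + -α * (-t) by ring, Real.exp_add]
    ring
  have hg1int : IntegrableOn g (Iic 0) := by
    have h0 : IntegrableOn (fun t => Real.exp (-α * ζ) * F (-t)) (Iic 0) :=
      (refl_integrableOn hF).const_mul _
    exact h0.congr_fun (fun t ht => (hg1eq t ht).symm) measurableSet_Iic
  have hg1val : ∫ t in Iic (0:ℝ), g t = Real.exp (-α * ζ) * I := by
    rw [setIntegral_congr_fun measurableSet_Iic hg1eq, integral_const_mul]
    congr 1
    simpa [hIdef] using integral_comp_neg_Iic (0:ℝ) F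
  -- continuity of g
  have hgc : Continuous g := by
    have c1 : Continuous fun t : ℝ => |t| ^ m :=
      continuous_abs.rpow_const (fun x => Or.inr hm.le)
    exact (c1.mul (Real.continuous_exp.comp
        (continuous_const.mul (continuous_id.max continuous_const)))).mul
      (Real.continuous_exp.comp (continuous_const.mul
        ((continuous_const.sub continuous_id).max continuous_const)))
  -- piece 2 : Ioc 0 ζ
  have hg2int : IntegrableOn g (Ioc 0 ζ) := hgc.integrableOn_Ioc
  have hg2 : ∫ t in Ioc (0:ℝ) ζ, g t ≤ ζ ^ m * Real.exp (-α * ζ) * ζ := by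
    have hb : ∀ t ∈ Ioc (0:ℝ) ζ, g t ≤ ζ ^ m * Real.exp (-α * ζ) := by
      intro t ht
      obtain ⟨ht1, ht2⟩ := ht
      have h1 : max t 0 = t := max_eq_left ht1.le
      have h2 : max (ζ - t) 0 = ζ - t := max_eq_left (by linarith)
      simp only [hgdef, h1, h2, abs_of_pos ht1]
      rw [mul_assoc, ← Real.exp_add, show -α * t + -α * (ζ - t) = -α * ζ by ring]
      exact mul_le_mul_of_nonneg_right (Real.rpow_le_rpow ht1.le ht2 hm.le) (Real.exp_pos _).le
    calc ∫ t in Ioc (0:ℝ) ζ, g t ≤ ∫ _t in Ioc (0:ℝ) ζ, ζ ^ m * Real.exp (-α * ζ) :=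
          setIntegral_mono_on hg2int (integrableOn_const measure_Ioc_lt_top.ne)
            measurableSet_Ioc hb
      _ = ζ ^ m * Real.exp (-α * ζ) * ζ := by
          rw [setIntegral_const, Real.volume_real_Ioc, smul_eq_mul, sub_zero,
            max_eq_left hζ.le]
          ring
  -- piece 3 : Ioi ζ
  have hg3eq : ∀ t ∈ Ioi ζ, g t = F t := by
    intro t ht
    have ht0 : (0:ℝ) < t := hζ.trans ht
    simp only [hgdef, hFdef, max_eq_left ht0.le,
      max_eq_right (by simp only [mem_Ioi] at ht; linarith : ζ - t ≤ 0), mul_zero,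
      Real.exp_zero, mul_one]
  have hg3int : IntegrableOn g (Ioi ζ) :=
    ((hF.mono_set (Ioi_subset_Ioi hζ.le)).congr_fun (fun t ht => (hg3eq t ht).symm)
      measurableSet_Ioi)
  set D : ℝ → ℝ := fun t =>
    Real.exp (-α * ζ) * (2 ^ m * ζ ^ m * E (t - ζ) + 2 ^ m * F (t - ζ)) with hDdef
  have hDint : IntegrableOn D (Ioi ζ) :=
    ((((shift_integrableOn ζ hE).const_mul _).add
      ((shift_integrableOn ζ hF).const_mul _)).const_mul _)
  have hg3 : ∫ t in Ioi ζ, g t ≤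
      Real.exp (-α * ζ) * (2 ^ m * ζ ^ m * I₀ + 2 ^ m * I) := by
    have hb : ∀ t ∈ Ioi ζ, g t ≤ D t := by
      intro t ht
      rw [hg3eq t ht]
      have ht' : ζ < t := ht
      have ht0 : (0:ℝ) < t := hζ.trans ht'
      have habs : |t - ζ| = t - ζ := abs_of_pos (by linarith)
      have hpow : t ^ m ≤ 2 ^ m * ζ ^ m + 2 ^ m * (t - ζ) ^ m := by
        rcases le_total (t - ζ) ζ with h | h
        · have h1 : t ≤ 2 * ζ := by linarith
          have := Real.rpow_le_rpow ht0.le h1 hm.le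
          rw [Real.mul_rpow (by norm_num) hζ.le] at this
          have h2 : (0:ℝ) ≤ 2 ^ m * (t - ζ) ^ m :=
            mul_nonneg (Real.rpow_nonneg (by norm_num) m)
              (Real.rpow_nonneg (by linarith) m)
          linarith
        · have h1 : t ≤ 2 * (t - ζ) := by linarith
          have := Real.rpow_le_rpow ht0.le h1 hm.le
          rw [Real.mul_rpow (by norm_num) (by linarith)] at this
          have h2 : (0:ℝ) ≤ 2 ^ m * ζ ^ m := by positivity
          linarith
      have hexp : Real.exp (-α * t) = Real.exp (-α * ζ) * Real.exp (-α * (t - ζ)) := by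
        rw [← Real.exp_add]; ring_nf
      simp only [hFdef, hDdef, hEdef, habs, abs_of_pos ht0]
      rw [hexp]
      calc t ^ m * (Real.exp (-α * ζ) * Real.exp (-α * (t - ζ)))
          ≤ (2 ^ m * ζ ^ m + 2 ^ m * (t - ζ) ^ m) *
            (Real.exp (-α * ζ) * Real.exp (-α * (t - ζ))) :=
            mul_le_mul_of_nonneg_right hpow (by positivity)
        _ = Real.exp (-α * ζ) * (2 ^ m * ζ ^ m * Real.exp (-α * (t - ζ)) +
            2 ^ m * ((t - ζ) ^ m * Real.exp (-α * (t - ζ)))) := by ring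
    have hDval : ∫ t in Ioi ζ, D t =
        Real.exp (-α * ζ) * (2 ^ m * ζ ^ m * I₀ + 2 ^ m * I) := by
      simp only [hDdef]
      rw [integral_const_mul]
      congr 1
      rw [integral_add ((shift_integrableOn ζ hE).const_mul _)
        ((shift_integrableOn ζ hF).const_mul _), integral_const_mul, integral_const_mul,
        shift_integral E ζ, shift_integral F ζ]
    rw [← hDval]
    exact setIntegral_mono_on hg3int hDint measurableSet_Ioi hb
  -- combine
  have hIoi : IntegrableOn g (Ioi 0) := by
    rw [← Ioc_union_Ioi_eq_Ioi hζ.le]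
    exact hg2int.union hg3int
  have hsplit : (∫ t : ℝ, g t) =
      (∫ t in Iic (0:ℝ), g t) + ((∫ t in Ioc (0:ℝ) ζ, g t) + ∫ t in Ioi ζ, g t) := by
    rw [← intervalIntegral.integral_Iic_add_Ioi hg1int hIoi]
    congr 1
    rw [← setIntegral_union (Ioc_disjoint_Ioi le_rfl) measurableSet_Ioi hg2int hg3int,
      Ioc_union_Ioi_eq_Ioi hζ.le]
  have hζm : ζ ^ m ≤ 1 + ζ ^ (m + 1) := by
    rcases le_total ζ 1 with h | h
    · have := Real.rpow_le_one hζ.le h hm.le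
      have h2 : (0:ℝ) ≤ ζ ^ (m+1) := Real.rpow_nonneg hζ.le _
      linarith
    · have := Real.rpow_le_rpow_of_exponent_le h (by linarith : m ≤ m + 1)
      linarith
  have hζm1 : ζ ^ m * ζ = ζ ^ (m + 1) := by
    rw [Real.rpow_add_one hζ.ne' m]
  have hexp_pos : (0:ℝ) < Real.exp (-α * ζ) := Real.exp_pos _
  have h2m : (0:ℝ) < 2 ^ m := Real.rpow_pos_of_pos (by norm_num) m
  have hζm1nn : (0:ℝ) ≤ ζ ^ (m+1) := Real.rpow_nonneg hζ.le _
  have main : I + ζ ^ (m+1) + (2 ^ m * ζ ^ m * I₀ + 2 ^ m * I) ≤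
      (I + 2 ^ m * I₀ + 2 ^ m * I + 1) * (1 + ζ ^ (m+1)) := by
    nlinarith [mul_le_mul_of_nonneg_right hζm (mul_nonneg h2m.le hI0nn),
      mul_nonneg hInn hζm1nn, mul_nonneg (mul_nonneg h2m.le hInn) hζm1nn,
      mul_nonneg (mul_nonneg h2m.le hI0nn) hζm1nn]
  rw [hsplit, hg1val]
  calc Real.exp (-α * ζ) * I + ((∫ t in Ioc (0:ℝ) ζ, g t) + ∫ t in Ioi ζ, g t)
      ≤ Real.exp (-α * ζ) * I + (ζ ^ m * Real.exp (-α * ζ) * ζ +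
        Real.exp (-α * ζ) * (2 ^ m * ζ ^ m * I₀ + 2 ^ m * I)) :=
        add_le_add_right (add_le_add hg2 hg3) _
    _ = Real.exp (-α * ζ) * (I + ζ ^ (m+1) + (2 ^ m * ζ ^ m * I₀ + 2 ^ m * I)) := by
        rw [← hζm1]; ring
    _ ≤ Real.exp (-α * ζ) * ((I + 2 ^ m * I₀ + 2 ^ m * I + 1) * (1 + ζ ^ (m+1))) :=
        mul_le_mul_of_nonneg_left main hexp_pos.le
    _ = (I + 2 ^ m * I₀ + 2 ^ m * I + 1) * (1 + ζ ^ (m+1)) * Real.exp (-α * ζ) := by ring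

theorem stmt2 (α m : ℝ) (hα : 0 < α) (hm : 0 < m) :
    ∃ C : ℝ, 0 < C ∧ ∀ x₁ x₂ : ℝ, x₁ < x₂ →
      (∫ x : ℝ, |x - x₁| ^ m * Real.exp (-α * max (x - x₁) 0) *
          Real.exp (-α * max (x₂ - x) 0)) ≤
        C * (1 + (x₂ - x₁) ^ (m + 1)) * Real.exp (-α * (x₂ - x₁)) := by
  obtain ⟨C, hC, h⟩ := key α m hα hm
  refine ⟨C, hC, fun x₁ x₂ hx => ?_⟩
  have hζ : 0 < x₂ - x₁ := sub_pos.mpr hx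
  have hkey := h (x₂ - x₁) hζ
  have heq : (∫ x : ℝ, |x - x₁| ^ m * Real.exp (-α * max (x - x₁) 0) *
      Real.exp (-α * max (x₂ - x) 0)) =
      ∫ t : ℝ, |t| ^ m * Real.exp (-α * max t 0) *
        Real.exp (-α * max ((x₂ - x₁) - t) 0) := by
    rw [← integral_sub_right_eq_self (fun t : ℝ => |t| ^ m * Real.exp (-α * max t 0) *
      Real.exp (-α * max ((x₂ - x₁) - t) 0)) x₁]
    congr 1
    ext x
    simp only [sub_sub_sub_cancel_right]
  rw [heq]
  exact hkey
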